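/- Let q = 2^m, n odd, u ∈ F_q^*, v ∈ F_q \ {0,1}, and F(x) = u·x² + v·x on the kernel of the trace: for every x ∈ F_{q^n} with Tr(x) = 0, applying the linearized operator T(Z) = Σ_{j=0}^{m-1} (u^{2^j-1}/v^{2^{j+1}-1}) · (Σ_{k=0}^{(n-1)/2} Z^{q^{2k}})^{2^j} to Z = u·x² + v·x recovers x, i.e., T(u·x² + v·x) = x. -/

import Mathlib

open Finset Polynomial

lemma aux_charF {F : Type*} [Field F] [Fintype F] (m : ℕ)
    (hF : Fintype.card F = 2 ^ m) : CharP F 2 := by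
  obtain ⟨p, hp⟩ := CharP.exists F
  haveI := hp
  haveI hprime : Fact p.Prime := ⟨CharP.char_is_prime F p⟩
  obtain ⟨k, hkp, hkc⟩ := FiniteField.card F p
  have hpd : p ∣ 2 ^ m := by rw [← hF, hkc]; exact dvd_pow_self p k.ne_zero
  have h2 : p = 2 :=
    (Nat.prime_dvd_prime_iff_eq hkp Nat.prime_two).mp (hkp.dvd_of_dvd_pow hpd)
  subst h2; exact hp

lemma aux_odd_split {M : Type*} [AddCommMonoid M] (g : ℕ → M) (t : ℕ) :
    ∑ i ∈ Finset.range (2 * t + 1), g i =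
      ∑ k ∈ Finset.range (t + 1), g (2 * k) + ∑ k ∈ Finset.range t, g (2 * k + 1) := by
  induction t with
  | zero => simp
  | succ t ih =>
    have h : 2 * (t + 1) + 1 = (2 * t + 1) + 1 + 1 := by ring
    have e1 : 2 * t + 1 + 1 = 2 * (t + 1) := by ring
    rw [h, Finset.sum_range_succ, Finset.sum_range_succ, ih,
      Finset.sum_range_succ (fun k => g (2 * k)) (t + 1),
      Finset.sum_range_succ (fun k => g (2 * k + 1)) t, e1]
    abel

lemma aux_trace {F K : Type*} [Field F] [Fintype F] [Field K] [Algebra F K]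
    (m : ℕ) (hm : 0 < m) (hF : Fintype.card F = 2 ^ m)
    (n : ℕ) (hn0 : 0 < n) (hK : Module.finrank F K = n) (z : K) :
    algebraMap F K (Algebra.trace F K z) = ∑ i ∈ Finset.range n, z ^ (2 ^ m) ^ i := by
  classical
  haveI : Fact (Nat.Prime 2) := ⟨Nat.prime_two⟩
  haveI hcharF : CharP F 2 := aux_charF m hF
  haveI hcharK : CharP K 2 := charP_of_injective_algebraMap' F 2
  haveI : FiniteDimensional F K := Module.finite_of_finrank_pos (by omega)
  haveI : Finite K := Module.finite_of_finite F
  haveI : Fintype K := Fintype.ofFinite K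
  have hcardK : Fintype.card K = (2 ^ m) ^ n := by
    rw [← hF, ← hK]; exact Module.card_eq_pow_finrank
  haveI : IsGalois F K := inferInstance
  have hmapsmul : ∀ (c : F) (w : K), iterateFrobenius K 2 m (c • w) = c • iterateFrobenius K 2 m w := by
    intro c w
    have hc : c ^ 2 ^ m = c := by rw [← hF]; exact FiniteField.pow_card c
    simp [iterateFrobenius_def, _root_.smul_pow, hc]
  let φh : K →ₐ[F] K := AlgHom.mk' (iterateFrobenius K 2 m) hmapsmul
  have hbij : Function.Bijective φh :=
    Finite.injective_iff_bijective.mp (φh.toRingHom.injective)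
  let φ : K ≃ₐ[F] K := AlgEquiv.ofBijective φh hbij
  have hφ : ∀ w : K, φ w = w ^ 2 ^ m := fun w => rfl
  have hφpow : ∀ (i : ℕ) (w : K), (φ ^ i) w = w ^ (2 ^ m) ^ i := by
    intro i
    induction i with
    | zero => intro w; simp
    | succ i ih =>
      intro w
      rw [pow_succ, AlgEquiv.mul_apply, hφ, ih, ← pow_mul]
      congr 1
      rw [pow_succ']
  have hcard_aut : Fintype.card (K ≃ₐ[F] K) = n := by
    rw [← Nat.card_eq_fintype_card, IsGalois.card_aut_eq_finrank, hK]
  have hdvd : orderOf φ ∣ n := hcard_aut ▸ orderOf_dvd_card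
  have horder : orderOf φ = n := by
    refine le_antisymm (Nat.le_of_dvd hn0 hdvd) ?_
    by_contra hlt
    push_neg at hlt
    set d := orderOf φ with hd
    have hd0 : 0 < d := orderOf_pos φ
    have hall : ∀ w : K, w ^ (2 ^ m) ^ d = w := by
      intro w
      have := pow_orderOf_eq_one φ
      calc w ^ (2 ^ m) ^ d = (φ ^ d) w := (hφpow d w).symm
        _ = w := by rw [this]; rfl
    have h2 : 1 < 2 ^ m := Nat.one_lt_two_pow (by omega)
    have hdeg : (X ^ (2 ^ m) ^ d - X : K[X]).natDegree = (2 ^ m) ^ d :=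
      FiniteField.X_pow_card_pow_sub_X_natDegree_eq K hd0.ne' h2
    have hne : (X ^ (2 ^ m) ^ d - X : K[X]) ≠ 0 :=
      FiniteField.X_pow_card_pow_sub_X_ne_zero K hd0.ne' h2
    have hsub : (Finset.univ : Finset K) ⊆ (X ^ (2 ^ m) ^ d - X : K[X]).roots.toFinset := by
      intro w _
      rw [Multiset.mem_toFinset, mem_roots hne]
      simp [hall w, sub_self]
    have hle : Fintype.card K ≤ (2 ^ m) ^ d := by
      calc Fintype.card K = (Finset.univ : Finset K).card := rfl
        _ ≤ (X ^ (2 ^ m) ^ d - X : K[X]).roots.toFinset.card := Finset.card_le_card hsub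
        _ ≤ Multiset.card (X ^ (2 ^ m) ^ d - X : K[X]).roots := Multiset.toFinset_card_le _
        _ ≤ (X ^ (2 ^ m) ^ d - X : K[X]).natDegree := Polynomial.card_roots' _
        _ = (2 ^ m) ^ d := hdeg
    rw [hcardK] at hle
    exact absurd hle (not_le.mpr (Nat.pow_lt_pow_right h2 hlt))
  have hinj : Set.InjOn (φ ^ ·) (Set.Iio n) := horder ▸ pow_injOn_Iio_orderOf
  have himg : (Finset.range n).image (φ ^ ·) = Finset.univ := by
    apply Finset.eq_univ_of_card
    rw [Finset.card_image_of_injOn (fun a ha b hb => hinj (by simpa using ha) (by simpa using hb)),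
      Finset.card_range, hcard_aut]
  rw [trace_eq_sum_automorphisms, ← himg,
    Finset.sum_image (fun a ha b hb => hinj (by simpa using ha) (by simpa using hb))]
  exact Finset.sum_congr rfl fun i _ => hφpow i z

theorem stmt17 {F K : Type*} [Field F] [Fintype F] [Field K] [Algebra F K]
    (m n : ℕ) (hm : 0 < m) (hn : Odd n)
    (hF : Fintype.card F = 2 ^ m) (hK : Module.finrank F K = n)
    (u v : F) (hu : u ≠ 0) (hv0 : v ≠ 0) (hv1 : v ≠ 1)
    (x : K) (hx : Algebra.trace F K x = 0) :
    ∑ j ∈ Finset.range m,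
        algebraMap F K (u ^ (2 ^ j - 1) / v ^ (2 ^ (j + 1) - 1)) *
          (∑ k ∈ Finset.range ((n - 1) / 2 + 1),
              (algebraMap F K u * x ^ 2 + algebraMap F K v * x) ^ (2 ^ m) ^ (2 * k)) ^ 2 ^ j =
      x := by
  classical
  obtain ⟨t, ht⟩ := hn
  have hn0 : 0 < n := by omega
  have ht' : (n - 1) / 2 = t := by omega
  haveI : Fact (Nat.Prime 2) := ⟨Nat.prime_two⟩
  haveI hcharF : CharP F 2 := aux_charF m hF
  haveI hcharK : CharP K 2 := charP_of_injective_algebraMap' F 2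
  haveI : FiniteDimensional F K := Module.finite_of_finrank_pos (by omega)
  haveI : Finite K := Module.finite_of_finite F
  haveI : Fintype K := Fintype.ofFinite K
  have hcardK : Fintype.card K = (2 ^ m) ^ n := by rw [← hF, ← hK]; exact Module.card_eq_pow_finrank
  have hfix : ∀ (c : F) (e : ℕ), (algebraMap F K c) ^ (2 ^ m) ^ e = algebraMap F K c := by
    intro c e
    rw [← map_pow]
    congr 1
    have := FiniteField.pow_card_pow e c
    rwa [hF] at this
  have hKfix : ∀ w : K, w ^ (2 ^ m) ^ n = w := by
    intro w
    have := FiniteField.pow_card w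
    rwa [hcardK] at this
  set S : K := ∑ k ∈ Finset.range (t + 1), x ^ (2 ^ m) ^ (2 * k) with hS
  -- Step 1
  have step1 : ∑ k ∈ Finset.range ((n - 1) / 2 + 1),
      (algebraMap F K u * x ^ 2 + algebraMap F K v * x) ^ (2 ^ m) ^ (2 * k)
      = algebraMap F K u * S ^ 2 + algebraMap F K v * S := by
    rw [ht']
    have hterm : ∀ k : ℕ,
        (algebraMap F K u * x ^ 2 + algebraMap F K v * x) ^ (2 ^ m) ^ (2 * k)
        = algebraMap F K u * (x ^ (2 ^ m) ^ (2 * k)) ^ 2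
          + algebraMap F K v * x ^ (2 ^ m) ^ (2 * k) := by
      intro k
      have he : (2 ^ m) ^ (2 * k) = 2 ^ (m * (2 * k)) := (pow_mul 2 m (2 * k)).symm
      rw [he, add_pow_char_pow, mul_pow, mul_pow, ← he, hfix u (2 * k), hfix v (2 * k),
        pow_right_comm]
    calc ∑ k ∈ Finset.range (t + 1),
        (algebraMap F K u * x ^ 2 + algebraMap F K v * x) ^ (2 ^ m) ^ (2 * k)
        = ∑ k ∈ Finset.range (t + 1),
            (algebraMap F K u * (x ^ (2 ^ m) ^ (2 * k)) ^ 2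
              + algebraMap F K v * x ^ (2 ^ m) ^ (2 * k)) :=
          Finset.sum_congr rfl fun k _ => hterm k
      _ = algebraMap F K u * ∑ k ∈ Finset.range (t + 1), (x ^ (2 ^ m) ^ (2 * k)) ^ 2
          + algebraMap F K v * ∑ k ∈ Finset.range (t + 1), x ^ (2 ^ m) ^ (2 * k) := by
          rw [Finset.sum_add_distrib, Finset.mul_sum, Finset.mul_sum]
      _ = algebraMap F K u * S ^ 2 + algebraMap F K v * S := by
          rw [hS, sum_pow_char]
  -- Step 2 : S ^ q = S + x
  have step2 : S ^ 2 ^ m = S + x := by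
    have h1 : S ^ 2 ^ m = ∑ k ∈ Finset.range (t + 1), x ^ (2 ^ m) ^ (2 * k + 1) := by
      rw [hS, sum_pow_char_pow]
      refine Finset.sum_congr rfl fun k _ => ?_
      rw [← pow_mul, ← pow_succ]
    have h2 : ∑ k ∈ Finset.range (t + 1), x ^ (2 ^ m) ^ (2 * k + 1)
        = (∑ k ∈ Finset.range t, x ^ (2 ^ m) ^ (2 * k + 1)) + x := by
      rw [Finset.sum_range_succ]
      congr 1
      rw [show 2 * t + 1 = n from ht.symm]
      exact hKfix x
    have h3 : S + ∑ k ∈ Finset.range t, x ^ (2 ^ m) ^ (2 * k + 1) = 0 := by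
      have htr := aux_trace m hm hF n hn0 hK x
      rw [hx, map_zero] at htr
      have hsplit := aux_odd_split (fun i => x ^ (2 ^ m) ^ i) t
      rw [← ht] at hsplit
      rw [hsplit] at htr
      exact htr.symm
    have h4 : ∑ k ∈ Finset.range t, x ^ (2 ^ m) ^ (2 * k + 1) = S := by
      have h5 := eq_neg_of_add_eq_zero_right h3
      rwa [CharTwo.neg_eq] at h5
    rw [h1, h2, h4]
  -- Main telescoping
  set a : ℕ → K := fun j => algebraMap F K (u ^ (2 ^ j - 1) / v ^ (2 ^ j - 1)) * S ^ 2 ^ j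
    with ha
  have hterm2 : ∀ j : ℕ,
      algebraMap F K (u ^ (2 ^ j - 1) / v ^ (2 ^ (j + 1) - 1)) *
        (algebraMap F K u * S ^ 2 + algebraMap F K v * S) ^ 2 ^ j = a (j + 1) - a j := by
    intro j
    have hj1 : (1 : ℕ) ≤ 2 ^ j := Nat.one_le_two_pow
    have hj : 2 ^ (j + 1) - 1 = (2 ^ j - 1) + 2 ^ j := by
      have : 2 ^ (j + 1) = 2 ^ j + 2 ^ j := by rw [pow_succ]; ring
      omega
    have hc1 : u ^ (2 ^ j - 1) / v ^ (2 ^ (j + 1) - 1) * u ^ 2 ^ j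
        = u ^ (2 ^ (j + 1) - 1) / v ^ (2 ^ (j + 1) - 1) := by
      rw [hj, pow_add u]
      ring
    have hc2 : u ^ (2 ^ j - 1) / v ^ (2 ^ (j + 1) - 1) * v ^ 2 ^ j
        = u ^ (2 ^ j - 1) / v ^ (2 ^ j - 1) := by
      rw [hj, pow_add v]
      field_simp
    have hpow : (algebraMap F K u * S ^ 2 + algebraMap F K v * S) ^ 2 ^ j
        = algebraMap F K (u ^ 2 ^ j) * S ^ 2 ^ (j + 1)
          + algebraMap F K (v ^ 2 ^ j) * S ^ 2 ^ j := by
      rw [add_pow_char_pow, mul_pow, mul_pow, ← map_pow, ← map_pow, ← pow_mul]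
      congr 2
      rw [pow_succ']
    rw [hpow, mul_add, ← mul_assoc, ← mul_assoc, ← map_mul, ← map_mul, hc1, hc2,
      CharTwo.sub_eq_add]
  calc ∑ j ∈ Finset.range m,
        algebraMap F K (u ^ (2 ^ j - 1) / v ^ (2 ^ (j + 1) - 1)) *
          (∑ k ∈ Finset.range ((n - 1) / 2 + 1),
              (algebraMap F K u * x ^ 2 + algebraMap F K v * x) ^ (2 ^ m) ^ (2 * k)) ^ 2 ^ j
      = ∑ j ∈ Finset.range m, (a (j + 1) - a j) := by
        refine Finset.sum_congr rfl fun j _ => ?_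
        rw [step1, hterm2 j]
    _ = a m - a 0 := Finset.sum_range_sub a m
    _ = x := by
        have hu1 : u ^ (2 ^ m - 1) = 1 := by
          rw [← hF]; exact FiniteField.pow_card_sub_one_eq_one u hu
        have hv1' : v ^ (2 ^ m - 1) = 1 := by
          rw [← hF]; exact FiniteField.pow_card_sub_one_eq_one v hv0
        rw [ha]
        simp only [hu1, hv1', pow_zero, pow_one, step2]
        simp
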